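/- Let z ∈ ℝ² and p ∈ ℝ² with 1/2 ≤ ‖p − z‖ ≤ 2. Define ρ(p) to be the point on the ray from p through z at distance 2 from p, i.e., ρ(p) = p + 2·(z − p)/‖z − p‖. Then ρ, restricted to the annulus {p : 1/2 ≤ ‖p − z‖ ≤ 2}, is Lipschitz continuous with Lipschitz constant at most 3 along any differentiable curve: if γ : [a,b] → ℝ² is a C¹ curve with 1/2 ≤ ‖γ(t) − z‖ ≤ 2 for all t, then the arc length of ρ ∘ γ is at most 3 times the arc length of γ. -/

import Mathlib

open RealInnerProductSpace

lemma stmt9_aux {E : Type*} [NormedAddCommGroup E] [InnerProductSpace ℝ E]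
    {γ : ℝ → E} {z : E} {t : ℝ} {v : E} (hv : HasDerivAt γ v t)
    (h1 : 1/2 ≤ ‖γ t - z‖) (h2 : ‖γ t - z‖ ≤ 2) :
    ∃ D : E, HasDerivAt (fun s => γ s + (2 / ‖z - γ s‖) • (z - γ s)) D t ∧ ‖D‖ ≤ 3 * ‖v‖ := by
  set w : E := z - γ t with hw
  set r : ℝ := ‖w‖ with hr
  have hrγ : r = ‖γ t - z‖ := norm_sub_rev _ _
  have hr1 : 1/2 ≤ r := hrγ ▸ h1
  have hr2 : r ≤ 2 := hrγ ▸ h2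
  have hrpos : 0 < r := lt_of_lt_of_le (by norm_num) hr1
  have hrne : r ≠ 0 := ne_of_gt hrpos
  have hc : HasDerivAt (fun s => z - γ s) (-v) t := hv.const_sub z
  have hinner : HasDerivAt (fun s => ⟪z - γ s, z - γ s⟫) (⟪w, -v⟫ + ⟪-v, w⟫) t :=
    hc.inner ℝ hc
  have hwwne : ⟪w, w⟫ ≠ 0 := by
    rw [real_inner_self_eq_norm_sq]
    positivity
  have hsqrt : HasDerivAt (fun s => Real.sqrt ⟪z - γ s, z - γ s⟫)
      ((1 / (2 * Real.sqrt ⟪w, w⟫)) * (⟪w, -v⟫ + ⟪-v, w⟫)) t :=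
    (Real.hasDerivAt_sqrt hwwne).comp t hinner
  have hfun : (fun s => Real.sqrt ⟪z - γ s, z - γ s⟫) = fun s => ‖z - γ s‖ := by
    funext s
    rw [real_inner_self_eq_norm_sq, Real.sqrt_sq (norm_nonneg _)]
  have hsqrtval : Real.sqrt ⟪w, w⟫ = r := by
    rw [real_inner_self_eq_norm_sq, Real.sqrt_sq (norm_nonneg _)]
  have hnorm : HasDerivAt (fun s => ‖z - γ s‖)
      ((1 / (2 * r)) * (⟪w, -v⟫ + ⟪-v, w⟫)) t := by
    rw [← hfun]
    simpa [hsqrtval] using hsqrt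
  have hdiv : HasDerivAt (fun s => 2 / ‖z - γ s‖)
      ((0 * r - 2 * ((1 / (2 * r)) * (⟪w, -v⟫ + ⟪-v, w⟫))) / r ^ 2) t :=
    (hasDerivAt_const t (2:ℝ)).div hnorm hrne
  have hsmul : HasDerivAt (fun s => (2 / ‖z - γ s‖) • (z - γ s))
      ((2 / r) • (-v) + ((0 * r - 2 * ((1 / (2 * r)) * (⟪w, -v⟫ + ⟪-v, w⟫))) / r ^ 2) • w) t :=
    hdiv.smul hc
  have htot := hv.add hsmul
  refine ⟨(1 - 2 / r) • v + (2 * ⟪w, v⟫ / r ^ 3) • w, ?_, ?_⟩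
  · convert htot using 1
    · rfl
    simp only [inner_neg_left, inner_neg_right, real_inner_comm w v]
    have hrr : r ≠ 0 := hrne
    clear_value w r
    match_scalars
    · field_simp
      ring
    · field_simp
      ring_nf
      try ring
  · set s : ℝ := ⟪w, v⟫ with hs
    set V : ℝ := ‖v‖ with hV
    have hVnn : 0 ≤ V := norm_nonneg _
    have hCS : s * s ≤ (r * r) * (V * V) := by
      have h := real_inner_mul_inner_self_le w v
      rw [real_inner_self_eq_norm_sq, real_inner_self_eq_norm_sq] at h
      calc s * s ≤ ‖w‖ ^ 2 * ‖v‖ ^ 2 := h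
        _ = (r * r) * (V * V) := by rw [← hr, ← hV]; ring
    have hsq : ‖(1 - 2 / r) • v + (2 * s / r ^ 3) • w‖ ^ 2
        = (1 - 2/r)^2 * V^2 + 2 * ((1 - 2/r) * (2 * s / r^3)) * s + (2*s/r^3)^2 * r^2 := by
      rw [norm_add_sq_real, norm_smul, norm_smul, real_inner_smul_left, real_inner_smul_right,
        real_inner_comm w v, ← hs]
      simp only [Real.norm_eq_abs, ← hr, ← hV]
      rw [mul_pow, mul_pow, sq_abs, sq_abs]
      ring
    have hE1 : (1 - 2/r)^2 * V^2 + 2 * ((1 - 2/r) * (2 * s / r^3)) * s + (2*s/r^3)^2 * r^2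
        = ((r - 2)^2 * r^2 * V^2 + 4 * (s*s) * (r - 1)) / r ^ 4 := by
      field_simp
      ring
    have hbound : ‖(1 - 2 / r) • v + (2 * s / r ^ 3) • w‖ ^ 2 ≤ (3 * V) ^ 2 := by
      rw [hsq, hE1, div_le_iff₀ (by positivity : (0:ℝ) < r ^ 4)]
      rcases le_total r 1 with hcase | hcase
      · nlinarith [mul_nonneg (mul_self_nonneg s) (sub_nonneg.mpr hcase),
          mul_nonneg (mul_nonneg (by linarith : (0:ℝ) ≤ 4*r - 2) (by linarith : (0:ℝ) ≤ 2*r + 2))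
            (mul_nonneg (mul_nonneg hVnn hVnn) (mul_nonneg hrpos.le hrpos.le)),
          mul_nonpos_of_nonneg_of_nonpos (mul_self_nonneg s)
            (by linarith : r - 1 ≤ (0:ℝ))]
      · nlinarith [mul_le_mul_of_nonneg_right hCS (by linarith : (0:ℝ) ≤ r - 1),
          mul_nonneg (mul_nonneg hVnn hVnn) (pow_nonneg hrpos.le 4),
          mul_nonneg (mul_nonneg hVnn hVnn)
            (mul_nonneg (mul_nonneg hrpos.le hrpos.le) (mul_nonneg hrpos.le hrpos.le))]
    calc ‖(1 - 2 / r) • v + (2 * s / r ^ 3) • w‖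
        = Real.sqrt (‖(1 - 2 / r) • v + (2 * s / r ^ 3) • w‖ ^ 2) :=
          (Real.sqrt_sq (norm_nonneg _)).symm
      _ ≤ Real.sqrt ((3 * V) ^ 2) := Real.sqrt_le_sqrt hbound
      _ = 3 * V := Real.sqrt_sq (by positivity)

theorem stmt_9 (z : EuclideanSpace ℝ (Fin 2)) (a b : ℝ) (hab : a ≤ b)
    (γ : ℝ → EuclideanSpace ℝ (Fin 2))
    (hγ : ContDiffOn ℝ 1 γ (Set.Icc a b))
    (hann : ∀ t ∈ Set.Icc a b, 1/2 ≤ ‖γ t - z‖ ∧ ‖γ t - z‖ ≤ 2) :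
    (∫ t in a..b, ‖deriv (fun s => γ s + (2 / ‖z - γ s‖) • (z - γ s)) t‖) ≤
      3 * ∫ t in a..b, ‖deriv γ t‖ := by
  rcases eq_or_lt_of_le hab with rfl | hlt
  · simp
  set f : ℝ → EuclideanSpace ℝ (Fin 2) := fun s => γ s + (2 / ‖z - γ s‖) • (z - γ s) with hfdef
  have hud : UniqueDiffOn ℝ (Set.Icc a b) := uniqueDiffOn_Icc hlt
  have hne : ∀ t ∈ Set.Icc a b, z - γ t ≠ 0 := by
    intro t ht h
    have h1 := (hann t ht).1
    rw [← norm_sub_rev, h, norm_zero] at h1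
    norm_num at h1
  have hfc : ContDiffOn ℝ 1 f (Set.Icc a b) := by
    apply hγ.add
    have hc : ContDiffOn ℝ 1 (fun s => z - γ s) (Set.Icc a b) := contDiffOn_const.sub hγ
    exact (contDiffOn_const.div (hc.norm ℝ hne)
      (fun t ht => norm_ne_zero_iff.mpr (hne t ht))).smul hc
  -- pointwise bound on Ioo
  have hIoo : ∀ t ∈ Set.Ioo a b,
      ‖derivWithin f (Set.Icc a b) t‖ ≤ 3 * ‖derivWithin γ (Set.Icc a b) t‖ := by
    intro t ht
    have htIcc : t ∈ Set.Icc a b := Set.mem_Icc_of_Ioo ht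
    have hmem : Set.Icc a b ∈ nhds t := Icc_mem_nhds ht.1 ht.2
    have hdγ : DifferentiableAt ℝ γ t :=
      ((hγ.differentiableOn one_ne_zero) t htIcc).differentiableAt hmem
    have hv : HasDerivAt γ (derivWithin γ (Set.Icc a b) t) t := by
      rw [derivWithin_of_mem_nhds hmem]; exact hdγ.hasDerivAt
    obtain ⟨D, hD, hDle⟩ := stmt9_aux hv (hann t htIcc).1 (hann t htIcc).2
    rw [derivWithin_of_mem_nhds hmem, hD.deriv]
    exact hDle
  -- continuity of the within-derivatives
  have hcf : ContinuousOn (fun t => ‖derivWithin f (Set.Icc a b) t‖) (Set.Icc a b) :=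
    (hfc.continuousOn_derivWithin hud le_rfl).norm
  have hcγ : ContinuousOn (fun t => ‖derivWithin γ (Set.Icc a b) t‖) (Set.Icc a b) :=
    (hγ.continuousOn_derivWithin hud le_rfl).norm
  have hib : ∀ᵐ x : ℝ, x ≠ b := by
    rw [MeasureTheory.ae_iff]
    have : {x : ℝ | ¬ x ≠ b} = {b} := by ext x; simp
    rw [this]
    exact Real.volume_singleton
  have hintf : IntervalIntegrable (fun t => ‖derivWithin f (Set.Icc a b) t‖)
      MeasureTheory.volume a b := by
    apply ContinuousOn.intervalIntegrable
    rwa [Set.uIcc_of_le hab]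
  have hintγ : IntervalIntegrable (fun t => 3 * ‖derivWithin γ (Set.Icc a b) t‖)
      MeasureTheory.volume a b := by
    apply ContinuousOn.intervalIntegrable
    rw [Set.uIcc_of_le hab]
    exact continuousOn_const.mul hcγ
  -- replace deriv with derivWithin inside the integrals
  have heqf : (∫ t in a..b, ‖deriv f t‖)
      = ∫ t in a..b, ‖derivWithin f (Set.Icc a b) t‖ := by
    apply intervalIntegral.integral_congr_ae
    filter_upwards [hib] with x hx hxI
    rw [Set.uIoc_of_le hab] at hxI
    have hxIoo : x ∈ Set.Ioo a b := ⟨hxI.1, lt_of_le_of_ne hxI.2 hx⟩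
    have hmem : Set.Icc a b ∈ nhds x := Icc_mem_nhds hxIoo.1 hxIoo.2
    rw [derivWithin_of_mem_nhds hmem]
  have heqγ : (∫ t in a..b, ‖deriv γ t‖)
      = ∫ t in a..b, ‖derivWithin γ (Set.Icc a b) t‖ := by
    apply intervalIntegral.integral_congr_ae
    filter_upwards [hib] with x hx hxI
    rw [Set.uIoc_of_le hab] at hxI
    have hxIoo : x ∈ Set.Ioo a b := ⟨hxI.1, lt_of_le_of_ne hxI.2 hx⟩
    have hmem : Set.Icc a b ∈ nhds x := Icc_mem_nhds hxIoo.1 hxIoo.2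
    rw [derivWithin_of_mem_nhds hmem]
  rw [heqf, heqγ, ← intervalIntegral.integral_const_mul]
  apply intervalIntegral.integral_mono_ae_restrict hab hintf hintγ
  have hsing : ∀ c : ℝ, ∀ᵐ x ∂(MeasureTheory.volume.restrict (Set.Icc a b)), x ≠ c := by
    intro c
    rw [MeasureTheory.ae_iff]
    have h : {x : ℝ | ¬ x ≠ c} = {c} := by ext x; simp
    rw [h, MeasureTheory.Measure.restrict_apply (measurableSet_singleton c)]
    exact MeasureTheory.measure_mono_null Set.inter_subset_left Real.volume_singleton
  filter_upwards [hsing a, hsing b, MeasureTheory.ae_restrict_mem measurableSet_Icc]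
    with x hxa hxb hxIcc
  exact hIoo x ⟨lt_of_le_of_ne hxIcc.1 (Ne.symm hxa), lt_of_le_of_ne hxIcc.2 hxb⟩
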